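/- arXiv:2206.05622 — 4 statements merged into one kernel-verified Lean document; each statement's English description precedes it below -/
import Mathlib

section
/- For every real λ < 0 and every real x > 0, the second iterate satisfies f_λ(f_λ(x)) < x, where f_λ(x) = λ/(1 − e^{−2x}). -/
/-- For every real λ < 0 and x > 0, f_λ(f_λ(x)) < x where f_λ(x) = λ/(1 − e^{−2x}). -/
theorem second_iterate_decreasing (lam x : ℝ) (hlam : lam < 0) (hx : 0 < x) :
    lam / (1 - Real.exp (-2 * (lam / (1 - Real.exp (-2 * x))))) < x := by
  have h1 : Real.exp (-2 * x) < 1 := by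
    rw [Real.exp_lt_one_iff]; linarith
  have hD1 : 0 < 1 - Real.exp (-2 * x) := by linarith
  set y := lam / (1 - Real.exp (-2 * x)) with hy
  have hyneg : y < 0 := div_neg_of_neg_of_pos hlam hD1
  have he : 1 + (-2 * y) ≤ Real.exp (-2 * y) := by
    linarith [Real.add_one_le_exp (-2 * y)]
  have hD2 : 1 - Real.exp (-2 * y) ≤ 2 * y := by linarith
  have hstep : lam / (1 - Real.exp (-2 * y)) ≤ (1 - Real.exp (-2 * x)) / 2 := by
    rw [div_le_iff_of_neg (by linarith : 1 - Real.exp (-2 * y) < 0)]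
    have hDy : (1 - Real.exp (-2 * x)) * y = lam := by
      rw [hy, mul_comm, div_mul_cancel₀ _ (ne_of_gt hD1)]
    nlinarith [mul_le_mul_of_nonneg_left hD2 (le_of_lt (half_pos hD1))]
  have hlast : (1 - Real.exp (-2 * x)) / 2 < x := by
    nlinarith [Real.add_one_lt_exp (show (-2 : ℝ) * x ≠ 0 by nlinarith)]
  linarith
end

section
/- Let λ < 0 be real and define f_λ : ℝ → ℝ by f_λ(x) = λ/(1 − e^{−2x}) (with any convention at x = 0, which the orbit never reaches). Then for every x > 0, the even iterates (f_λ ∘ f_λ)^[n](x) tend to 0 as n → ∞, and the subsequent odd iterates f_λ((f_λ ∘ f_λ)^[n](x)) tend to −∞ as n → ∞. (Thus for λ < 0 the asymptotic value λ is attracted to the zero virtual cycle {0, −∞}.) -/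
open Filter Topology

lemma exp_quad_aux (t : ℝ) (ht : 0 ≤ t) : 1 + t + t^2/4 ≤ Real.exp t := by
  have h := Real.add_one_le_exp (t/2)
  have h2 : Real.exp t = Real.exp (t/2) * Real.exp (t/2) := by
    rw [← Real.exp_add]; ring_nf
  nlinarith [Real.exp_pos (t/2)]

/-- For real λ < 0 and f_λ(x) = λ/(1 − e^{−2x}), for every x > 0 the even iterates
(f_λ ∘ f_λ)^[n](x) tend to 0 and the subsequent odd iterates tend to −∞. -/
theorem escape_to_zero_virtual_cycle (lam : ℝ) (hlam : lam < 0)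
    (f : ℝ → ℝ) (hf : ∀ x : ℝ, x ≠ 0 → f x = lam / (1 - Real.exp (-2 * x)))
    (x : ℝ) (hx : 0 < x) :
    Tendsto (fun n : ℕ => (f ∘ f)^[n] x) atTop (𝓝 0) ∧
    Tendsto (fun n : ℕ => f ((f ∘ f)^[n] x)) atTop atBot := by
  set c : ℝ := -lam with hc_def
  have hc : 0 < c := by simp only [hc_def]; linarith
  -- denominator facts for z > 0
  have hden : ∀ z : ℝ, 0 < z →
      0 < 1 - Real.exp (-2*z) ∧ 1 - Real.exp (-2*z) ≤ 2*z ∧ 1 - Real.exp (-2*z) < 1 := by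
    intro z hz
    have h1 : Real.exp (-2*z) < 1 := by
      calc Real.exp (-2*z) < Real.exp 0 := Real.exp_lt_exp.mpr (by linarith)
        _ = 1 := Real.exp_zero
    have h2 : 1 + (-2*z) ≤ Real.exp (-2*z) := by
      have := Real.add_one_le_exp (-2*z); linarith
    have h3 := Real.exp_pos (-2*z)
    exact ⟨by linarith, by linarith, by linarith⟩
  -- f on positives
  have hfle : ∀ z : ℝ, 0 < z → f z ≤ lam / (2*z) := by
    intro z hz
    obtain ⟨hd1, hd2, _⟩ := hden z hz
    rw [hf z hz.ne']
    rw [div_le_div_iff₀ hd1 (by linarith)]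
    nlinarith
  have hfneg : ∀ z : ℝ, 0 < z → f z < 0 := by
    intro z hz
    exact lt_of_le_of_lt (hfle z hz) (div_neg_of_neg_of_pos hlam (by linarith))
  have hflam : ∀ z : ℝ, 0 < z → f z ≤ lam := by
    intro z hz
    obtain ⟨hd1, _, hd3⟩ := hden z hz
    rw [hf z hz.ne']
    rw [div_le_iff₀ hd1]
    nlinarith
  set M : ℝ := c / (Real.exp (2*c) - 1) with hM_def
  have hexp2c : 1 < Real.exp (2*c) := by
    calc (1:ℝ) = Real.exp 0 := Real.exp_zero.symm
      _ < Real.exp (2*c) := Real.exp_lt_exp.mpr (by linarith)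
  have hM : 0 < M := div_pos hc (by linarith)
  -- key estimates on the second iterate
  have hg : ∀ z : ℝ, 0 < z →
      0 < f (f z) ∧ f (f z) ≤ M ∧ f (f z) ≤ 4*z^2/(4*z+c) := by
    intro z hz
    set y := f z with hy_def
    have hy2 : y ≤ lam/(2*z) := hfle z hz
    have hyl : y ≤ lam := hflam z hz
    have hy0 : y < 0 := hfneg z hz
    set E := Real.exp (-2*y) with hE_def
    have hE1 : 1 < E := by
      calc (1:ℝ) = Real.exp 0 := Real.exp_zero.symm
        _ < E := Real.exp_lt_exp.mpr (by linarith)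
    have hffz : f y = c / (E - 1) := by
      rw [hf y hy0.ne]
      rw [hc_def, div_eq_div_iff (by linarith : 1 - E ≠ 0) (by linarith : E - 1 ≠ 0)]
      ring
    refine ⟨?_, ?_, ?_⟩
    · rw [hffz]; exact div_pos hc (by linarith)
    · rw [hffz, hM_def, div_le_div_iff₀ (by linarith) (by linarith)]
      have hEge : Real.exp (2*c) ≤ E := by
        rw [hE_def]; exact Real.exp_le_exp.mpr (by simp only [hc_def]; linarith)
      nlinarith
    · rw [hffz, div_le_div_iff₀ (by linarith) (by positivity)]
      -- E ≥ exp(c/z) ≥ 1 + c/z + (c/z)^2/4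
      have ht : (0:ℝ) ≤ c/z := by positivity
      have hEge : Real.exp (c/z) ≤ E := by
        rw [hE_def]
        apply Real.exp_le_exp.mpr
        have h := (le_div_iff₀ (by linarith : (0:ℝ) < 2*z)).mp hy2
        rw [div_le_iff₀ hz, hc_def]
        nlinarith
      have hquad := exp_quad_aux (c/z) ht
      have hE' : 1 + c/z + (c/z)^2/4 ≤ E := le_trans hquad hEge
      have e1 : c/z * z = c := div_mul_cancel₀ c hz.ne'
      have e2 : (c/z)^2 * z^2 = c^2 := by
        field_simp
      nlinarith [mul_le_mul_of_nonneg_right hE' (by positivity : (0:ℝ) ≤ 4*z^2)]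
  set q : ℝ := 4*M/(4*M+c) with hq_def
  have hq0 : 0 ≤ q := by positivity
  have hq1 : q < 1 := by
    rw [hq_def, div_lt_one (by linarith)]; linarith
  have hstep : ∀ z : ℝ, 0 < z → z ≤ M → f (f z) ≤ q * z := by
    intro z hz hzM
    have h3 := (hg z hz).2.2
    refine le_trans h3 ?_
    rw [div_le_iff₀ (by positivity), hq_def, div_mul_eq_mul_div, div_mul_eq_mul_div,
      le_div_iff₀ (by linarith)]
    nlinarith [mul_le_mul_of_nonneg_left hzM (by positivity : (0:ℝ) ≤ z*c)]
  set X : ℕ → ℝ := fun n => (f ∘ f)^[n] x with hX_def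
  have hXsucc : ∀ n, X (n+1) = f (f (X n)) := by
    intro n
    simp only [hX_def, Function.iterate_succ_apply', Function.comp_apply]
  have hXpos : ∀ n, 0 < X n := by
    intro n
    induction n with
    | zero => exact hx
    | succ n ih => rw [hXsucc]; exact (hg _ ih).1
  have hXM : ∀ n, X (n+1) ≤ M := by
    intro n; rw [hXsucc]; exact (hg _ (hXpos n)).2.1
  have hXq : ∀ n, X (n+1) ≤ M * q^n := by
    intro n
    induction n with
    | zero => simpa using hXM 0
    | succ n ih =>
      have h1 : X (n+2) ≤ q * X (n+1) := by
        rw [hXsucc (n+1)]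
        exact hstep _ (hXpos (n+1)) (hXM n)
      calc X (n+2) ≤ q * X (n+1) := h1
        _ ≤ q * (M * q^n) := mul_le_mul_of_nonneg_left ih hq0
        _ = M * q^(n+1) := by ring
  have htend0 : Tendsto X atTop (𝓝 0) := by
    have hq' : Tendsto (fun n : ℕ => M * q^n) atTop (𝓝 0) := by
      simpa using (tendsto_pow_atTop_nhds_zero_of_lt_one hq0 hq1).const_mul M
    have h1 : Tendsto (fun n => X (n+1)) atTop (𝓝 0) :=
      tendsto_of_tendsto_of_tendsto_of_le_of_le tendsto_const_nhds hq'
        (fun n => (hXpos (n+1)).le) hXq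
    exact (tendsto_add_atTop_iff_nat 1).mp h1
  refine ⟨htend0, ?_⟩
  have htendW : Tendsto X atTop (𝓝[>] 0) :=
    tendsto_nhdsWithin_of_tendsto_nhds_of_eventually_within X htend0
      (Eventually.of_forall fun n => hXpos n)
  have hinv : Tendsto (fun n => (X n)⁻¹) atTop atTop :=
    tendsto_inv_nhdsGT_zero.comp htendW
  have h2 : Tendsto (fun n => (c/2) * (X n)⁻¹) atTop atTop :=
    hinv.const_mul_atTop (by positivity)
  have h3 : Tendsto (fun n => -((c/2) * (X n)⁻¹)) atTop atBot :=
    tendsto_neg_atTop_atBot.comp h2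
  apply tendsto_atBot_mono _ h3
  intro n
  have hz := hXpos n
  have hle : f (X n) ≤ lam / (2 * X n) := hfle _ hz
  have heq : lam / (2 * X n) = -((c/2) * (X n)⁻¹) := by
    rw [hc_def]; field_simp
  rw [← heq]
  exact hle
end

section
/- For every λ ∈ ℂ with λ ≠ 0, the function z ↦ f_λ(f_λ(z))·e^{2z} tends to −1/2 as Re z → −∞, where f_λ(z) = λ/(1 − e^{−2z}). (Equivalently, f_λ²(z) ∼ −e^{−2z}/2 in the left asymptotic tract, independently of λ.) -/
open Filter Topology Complex

/-- For λ ≠ 0, f_λ(f_λ(z))·e^{2z} → −1/2 as Re z → −∞, where f_λ(z) = λ/(1 − e^{−2z}). -/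
theorem second_iterate_left_tract (lam : ℂ) (hlam : lam ≠ 0) :
    Tendsto
      (fun z : ℂ =>
        lam / (1 - Complex.exp (-2 * (lam / (1 - Complex.exp (-2 * z))))) *
          Complex.exp (2 * z))
      (comap Complex.re atBot) (𝓝 (-1 / 2)) := by
  set F := comap Complex.re atBot with hF
  -- u tends to 0
  have h2 : Tendsto (fun z : ℂ => 2 * z) F F := by
    rw [hF, tendsto_comap_iff]
    have : (Complex.re ∘ fun z : ℂ => 2 * z) = fun z : ℂ => 2 * z.re := by
      funext z; simp [Complex.mul_re]
    rw [this]
    exact (tendsto_comap).const_mul_atBot (by norm_num)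
  have hu : Tendsto (fun z : ℂ => Complex.exp (2 * z)) F (𝓝 0) :=
    Complex.tendsto_exp_comap_re_atBot.comp h2
  -- w z rewritten
  have key : ∀ z : ℂ, lam / (1 - Complex.exp (-2 * z)) =
      lam * Complex.exp (2 * z) / (Complex.exp (2 * z) - 1) := by
    intro z
    have hne : Complex.exp (2 * z) ≠ 0 := Complex.exp_ne_zero _
    have : Complex.exp (-2 * z) = (Complex.exp (2 * z))⁻¹ := by
      rw [show (-2 : ℂ) * z = -(2 * z) by ring, Complex.exp_neg]
    rw [this, show (1 : ℂ) - (Complex.exp (2*z))⁻¹ =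
      (Complex.exp (2*z) - 1) / Complex.exp (2*z) by field_simp,
      div_div_eq_mul_div]
  set w : ℂ → ℂ := fun z => lam / (1 - Complex.exp (-2 * z)) with hwdef
  have hw0 : Tendsto w F (𝓝 0) := by
    have hc : Tendsto (fun u : ℂ => lam * u / (u - 1)) (𝓝 0) (𝓝 0) := by
      have hca : ContinuousAt (fun u : ℂ => lam * u / (u - 1)) 0 := by
        apply ContinuousAt.div
        · fun_prop
        · fun_prop
        · norm_num
      simpa using hca.tendsto
    have : Tendsto (fun z => lam * Complex.exp (2*z) / (Complex.exp (2*z) - 1)) F (𝓝 0) :=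
      hc.comp hu
    refine this.congr fun z => (key z).symm
  -- eventually ‖u‖ < 1/2
  have hsmall : ∀ᶠ z in F, ‖Complex.exp (2 * z)‖ < 1/2 := by
    have := Metric.tendsto_nhds.mp hu (1/2) (by norm_num)
    simpa [dist_zero_right] using this
  have hune1 : ∀ᶠ z in F, Complex.exp (2 * z) ≠ 1 := by
    filter_upwards [hsmall] with z hz
    intro h; rw [h] at hz; norm_num at hz
  have hwne : ∀ᶠ z in F, w z ≠ 0 := by
    filter_upwards [hune1] with z hz
    have hne : Complex.exp (2 * z) ≠ 0 := Complex.exp_ne_zero _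
    rw [hwdef]
    simp only [key z]
    exact div_ne_zero (mul_ne_zero hlam hne) (sub_ne_zero.mpr hz)
  have hw' : Tendsto w F (𝓝[≠] (0:ℂ)) := by
    rw [tendsto_nhdsWithin_iff]
    exact ⟨hw0, hwne⟩
  -- the quotient (1 - exp(-2w))/(2w) → 1
  have hslope : Tendsto (fun v : ℂ => (Complex.exp v - 1) / v) (𝓝[≠] (0:ℂ)) (𝓝 1) := by
    have h := hasDerivAt_iff_tendsto_slope.mp (Complex.hasDerivAt_exp 0)
    simp only [Complex.exp_zero] at h
    refine h.congr fun v => ?_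
    simp [slope_def_field, div_eq_div_iff]
  have hm : Tendsto (fun v : ℂ => -2 * v) (𝓝[≠] (0:ℂ)) (𝓝[≠] (0:ℂ)) := by
    rw [tendsto_nhdsWithin_iff]
    constructor
    · have : Tendsto (fun v : ℂ => -2 * v) (𝓝 0) (𝓝 (-2 * 0)) :=
        (continuous_const.mul continuous_id).tendsto 0
      simpa using this.mono_left nhdsWithin_le_nhds
    · filter_upwards [self_mem_nhdsWithin] with v hv
      exact mul_ne_zero (by norm_num) hv
  have hphi : Tendsto (fun v : ℂ => (1 - Complex.exp (-2 * v)) / (2 * v))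
      (𝓝[≠] (0:ℂ)) (𝓝 1) := by
    have := hslope.comp hm
    refine this.congr fun v => ?_
    simp only [Function.comp]
    rw [show (2:ℂ) * v = -(-2 * v) by ring, ← neg_sub (Complex.exp (-2*v)) 1,
      neg_div_neg_eq]
  have hq : Tendsto (fun z => (1 - Complex.exp (-2 * w z)) / (2 * w z)) F (𝓝 1) :=
    hphi.comp hw'
  -- combine
  have hnum : Tendsto (fun z => (Complex.exp (2 * z) - 1) / 2) F (𝓝 (-1/2)) := by
    have := (hu.sub (tendsto_const_nhds (x := (1:ℂ)))).div_const 2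
    simpa using this
  have hG : Tendsto (fun z => ((Complex.exp (2 * z) - 1) / 2) /
      ((1 - Complex.exp (-2 * w z)) / (2 * w z))) F (𝓝 (-1/2)) := by
    have := hnum.div hq one_ne_zero
    rw [div_one] at this; exact this
  refine hG.congr' ?_
  filter_upwards [hune1] with z hz
  have hne : Complex.exp (2 * z) ≠ 0 := Complex.exp_ne_zero _
  have hw_eq : (Complex.exp (2 * z) - 1) / 2 * (2 * w z) = lam * Complex.exp (2 * z) := by
    rw [hwdef]
    simp only [key z]
    have h1 : Complex.exp (2 * z) - 1 ≠ 0 := sub_ne_zero.mpr hz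
    field_simp
  show (Complex.exp (2 * z) - 1) / 2 / ((1 - Complex.exp (-2 * w z)) / (2 * w z)) =
    lam / (1 - Complex.exp (-2 * w z)) * Complex.exp (2 * z)
  rw [div_div_eq_mul_div, hw_eq]
  ring
end

section
/- Let λ ∈ ℂ, λ ≠ 0, and let f_λ(z) = λ/(1 − e^{−2z}). Along the asymptotic path γ(t) = −t (t real, t → +∞): f_λ(γ(t)) → 0, Re f_λ²(γ(t)) → −∞, and f_λ³(γ(t)) → 0. (Thus every f_λ in the family has a zero virtual cycle {−∞, 0} of minimal period 2.) -/
open Filter Topology Complex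

private lemma div_tendsto_zero_of_norm (c : ℂ) {d : ℝ → ℂ}
    (hd : Tendsto (fun t => ‖d t‖) atTop atTop) :
    Tendsto (fun t : ℝ => c / d t) atTop (𝓝 0) := by
  rw [tendsto_zero_iff_norm_tendsto_zero]
  simpa [norm_div] using Filter.Tendsto.div_atTop (tendsto_const_nhds : Tendsto (fun _ : ℝ => ‖c‖) atTop (𝓝 ‖c‖)) hd

/-- For λ ≠ 0 and f_λ(z) = λ/(1 − e^{−2z}), along γ(t) = −t (t → +∞):
f_λ(γ(t)) → 0, Re f_λ²(γ(t)) → −∞, and f_λ³(γ(t)) → 0: the zero virtual cycle. -/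
theorem zero_virtual_cycle (lam : ℂ) (hlam : lam ≠ 0)
    (f : ℂ → ℂ) (hf : ∀ z : ℂ, f z = lam / (1 - Complex.exp (-2 * z))) :
    Tendsto (fun t : ℝ => f (-(t : ℂ))) atTop (𝓝 0) ∧
    Tendsto (fun t : ℝ => (f (f (-(t : ℂ)))).re) atTop atBot ∧
    Tendsto (fun t : ℝ => f (f (f (-(t : ℂ))))) atTop (𝓝 0) := by
  set E : ℝ → ℝ := fun t => Real.exp (2 * t) with hE
  have hEtop : Tendsto E atTop atTop :=
    Real.tendsto_exp_atTop.comp (tendsto_id.const_mul_atTop (by norm_num : (0:ℝ) < 2))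
  have hexp : ∀ t : ℝ, Complex.exp (-2 * -(t : ℂ)) = ((E t : ℝ) : ℂ) := by
    intro t
    rw [show (-2 * -(t : ℂ)) = (((2 * t : ℝ) : ℂ)) by push_cast; ring, ← Complex.ofReal_exp]
  -- the first iterate, written explicitly
  have hf1 : ∀ t : ℝ, f (-(t : ℂ)) = lam / (1 - ((E t : ℝ) : ℂ)) := by
    intro t; rw [hf, hexp]
  -- norm of the denominator tends to infinity
  have h1norm : Tendsto (fun t : ℝ => ‖(1 : ℂ) - ((E t : ℝ) : ℂ)‖) atTop atTop := by
    apply tendsto_atTop_mono (fun t => ?_) (tendsto_atTop_add_const_right atTop (-1) hEtop)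
    have h1 : ‖((E t : ℝ) : ℂ)‖ - ‖(1 : ℂ)‖ ≤ ‖((E t : ℝ) : ℂ) - 1‖ := norm_sub_norm_le _ _
    have h2 : ‖((E t : ℝ) : ℂ)‖ = E t := by
      rw [Complex.norm_real, Real.norm_eq_abs, abs_of_pos]
      rw [hE]; exact Real.exp_pos _
    rw [norm_sub_rev, h2, norm_one] at h1
    linarith
  -- Part 1
  have part1 : Tendsto (fun t : ℝ => f (-(t : ℂ))) atTop (𝓝 0) := by
    simp only [hf1]
    exact div_tendsto_zero_of_norm lam h1norm
  -- the first iterate as w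
  set w : ℝ → ℂ := fun t => lam / (1 - ((E t : ℝ) : ℂ)) with hw
  have hwne : ∀ᶠ t : ℝ in atTop, w t ≠ 0 := by
    filter_upwards [eventually_gt_atTop (0 : ℝ)] with t ht
    have hE1 : 1 < E t := by
      rw [hE]
      calc (1:ℝ) = Real.exp 0 := Real.exp_zero.symm
      _ < Real.exp (2 * t) := Real.exp_lt_exp.mpr (by linarith)
    have hden : (1 : ℂ) - ((E t : ℝ) : ℂ) ≠ 0 := by
      intro h
      have : ((1 - E t : ℝ) : ℂ) = 0 := by push_cast; exact h
      rw [Complex.ofReal_eq_zero] at this; linarith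
    exact div_ne_zero hlam hden
  have hden_ne : ∀ᶠ t : ℝ in atTop, (1 : ℂ) - ((E t : ℝ) : ℂ) ≠ 0 := by
    filter_upwards [eventually_gt_atTop (0 : ℝ)] with t ht
    have hE1 : 1 < E t := by
      rw [hE]
      calc (1:ℝ) = Real.exp 0 := Real.exp_zero.symm
      _ < Real.exp (2 * t) := Real.exp_lt_exp.mpr (by linarith)
    intro h
    have : ((1 - E t : ℝ) : ℂ) = 0 := by push_cast; exact h
    rw [Complex.ofReal_eq_zero] at this; linarith
  have hw0 : Tendsto w atTop (𝓝 0) := by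
    have := part1; simpa only [hf1] using this
  have hwpunct : Tendsto w atTop (𝓝[≠] (0 : ℂ)) :=
    tendsto_nhdsWithin_iff.mpr ⟨hw0, hwne⟩
  -- the slope function
  set h : ℂ → ℂ := fun z => 1 - Complex.exp (-2 * z) with hh
  have hderiv : HasDerivAt h 2 0 := by
    have h1 : HasDerivAt (fun z : ℂ => (-2 : ℂ) * z) (-2) 0 := by
      simpa using (hasDerivAt_id (0 : ℂ)).const_mul (-2 : ℂ)
    have h2 : HasDerivAt (fun z : ℂ => Complex.exp (-2 * z)) (-2) 0 := by
      have h3 := (Complex.hasDerivAt_exp ((-2 : ℂ) * 0)).comp 0 h1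
      simp only [mul_zero, Complex.exp_zero, one_mul] at h3
      exact h3
    rw [hh]
    exact ((hasDerivAt_const (0 : ℂ) (1 : ℂ)).sub h2).congr_deriv (by norm_num)
  have hslope : Tendsto (slope h 0) (𝓝[≠] (0 : ℂ)) (𝓝 2) :=
    hasDerivAt_iff_tendsto_slope.mp hderiv
  set S : ℝ → ℂ := fun t => slope h 0 (w t) with hS
  have hStends : Tendsto S atTop (𝓝 2) := hslope.comp hwpunct
  -- express the second iterate
  have hkey : ∀ᶠ t : ℝ in atTop,
      f (f (-(t : ℂ))) = ((1 - E t : ℝ) : ℂ) * (S t)⁻¹ := by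
    filter_upwards [hwne, hden_ne] with t hwt hdt
    have hSdef : (1 : ℂ) - Complex.exp (-2 * w t) = w t * S t := by
      rw [hS]
      simp only [slope_def_field]
      rw [hh]
      simp only [mul_zero, Complex.exp_zero, sub_self, sub_zero, sub_zero]
      field_simp
    have hfw : f (-(t : ℂ)) = w t := hf1 t
    rw [hf, hfw, hSdef, ← div_div, div_eq_mul_inv]
    congr 1
    have hwdef : w t = lam / (1 - ((E t : ℝ) : ℂ)) := rfl
    rw [hwdef]
    push_cast
    field_simp
  -- real part computation
  have hRe : Tendsto (fun t : ℝ => (f (f (-(t : ℂ)))).re) atTop atBot := by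
    have hre_eq : ∀ᶠ t : ℝ in atTop,
        (f (f (-(t : ℂ)))).re = (1 - E t) * ((S t)⁻¹).re := by
      filter_upwards [hkey] with t ht
      rw [ht, Complex.re_ofReal_mul]
    have h1 : Tendsto (fun t : ℝ => 1 - E t) atTop atBot := by
      have hneg : Tendsto (fun t => -E t) atTop atBot := tendsto_neg_atBot_iff.mpr hEtop
      simpa [sub_eq_add_neg] using tendsto_atBot_add_const_left atTop 1 hneg
    have h2 : Tendsto (fun t : ℝ => ((S t)⁻¹).re) atTop (𝓝 (1 / 2)) := by
      have hinv : Tendsto (fun t => (S t)⁻¹) atTop (𝓝 (2 : ℂ)⁻¹) :=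
        hStends.inv₀ two_ne_zero
      have hc := (Complex.continuous_re.tendsto ((2:ℂ)⁻¹)).comp hinv
      have h2' : ((2 : ℂ)⁻¹).re = 1 / 2 := by
        have : (2 : ℂ)⁻¹ = ((1 / 2 : ℝ) : ℂ) := by norm_num
        rw [this, Complex.ofReal_re]
      rw [h2'] at hc
      exact hc
    have hmul := h1.atBot_mul_pos (by norm_num : (0:ℝ) < 1/2) h2
    exact Tendsto.congr' (EventuallyEq.symm hre_eq) hmul
  refine ⟨part1, hRe, ?_⟩
  -- Part 3
  have hnorm3 : Tendsto (fun t : ℝ => ‖(1 : ℂ) - Complex.exp (-2 * f (f (-(t : ℂ))))‖) atTop atTop := by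
    have hexp_norm : ∀ t : ℝ, ‖Complex.exp (-2 * f (f (-(t : ℂ))))‖
        = Real.exp (-2 * (f (f (-(t : ℂ)))).re) := by
      intro t
      rw [Complex.norm_exp]
      congr 1
      simp [Complex.mul_re]
    have hretop : Tendsto (fun t : ℝ => -2 * (f (f (-(t : ℂ)))).re) atTop atTop := by
      exact hRe.const_mul_atBot_of_neg (by norm_num : (-2 : ℝ) < 0)
    have hexptop : Tendsto (fun t : ℝ => ‖Complex.exp (-2 * f (f (-(t : ℂ))))‖) atTop atTop := by
      simp only [hexp_norm]
      exact Real.tendsto_exp_atTop.comp hretop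
    apply tendsto_atTop_mono (fun t => ?_) (tendsto_atTop_add_const_right atTop (-1) hexptop)
    have h1 := norm_sub_norm_le (Complex.exp (-2 * f (f (-(t : ℂ))))) 1
    rw [norm_sub_rev] at h1
    simpa using h1
  have : Tendsto (fun t : ℝ => lam / (1 - Complex.exp (-2 * f (f (-(t : ℂ)))))) atTop (𝓝 0) :=
    div_tendsto_zero_of_norm lam hnorm3
  simpa only [← hf] using this
end
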